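/- Let X be a finite-dimensional Banach space and let Y be a uniformly convex Banach space. Then NAπ(X ⊗π Y) is ‖·‖π-dense in X ⊗π Y. -/

import Mathlib

noncomputable section

open scoped BigOperators

/-- The predicate stating that the Banach space `Z`, together with the bounded bilinear map
`t : X → Y → Z` and the correspondence `lift` between operators `X → Y*` and functionals on `Z`,
realizes the projective tensor product `X ⊗π Y`.  The field `norm_eq_sInf` says that the norm of
`Z` is the projective norm: `‖z‖π = inf {∑ₙ ‖xₙ‖‖yₙ‖ : z = ∑ₙ xₙ ⊗ yₙ}`, and the `lift` fields
encode the canonical isometric identification `(X ⊗π Y)* = L(X, Y*)`. -/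
structure IsProjTensorProduct (X Y Z : Type*)
    [NormedAddCommGroup X] [NormedSpace ℝ X]
    [NormedAddCommGroup Y] [NormedSpace ℝ Y]
    [NormedAddCommGroup Z] [NormedSpace ℝ Z]
    (t : X →L[ℝ] Y →L[ℝ] Z)
    (lift : (X →L[ℝ] (Y →L[ℝ] ℝ)) → (Z →L[ℝ] ℝ)) : Prop where
  norm_tmul_le : ∀ (x : X) (y : Y), ‖t x y‖ ≤ ‖x‖ * ‖y‖
  exists_rep : ∀ z : Z, ∃ (x : ℕ → X) (y : ℕ → Y),
    Summable (fun n => ‖x n‖ * ‖y n‖) ∧ HasSum (fun n => t (x n) (y n)) z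
  norm_eq_sInf : ∀ z : Z, ‖z‖ = sInf {r : ℝ | ∃ (x : ℕ → X) (y : ℕ → Y),
    Summable (fun n => ‖x n‖ * ‖y n‖) ∧ HasSum (fun n => t (x n) (y n)) z ∧
    r = ∑' n, ‖x n‖ * ‖y n‖}
  lift_tmul : ∀ (G : X →L[ℝ] (Y →L[ℝ] ℝ)) (x : X) (y : Y), lift G (t x y) = G x y
  norm_lift : ∀ G : X →L[ℝ] (Y →L[ℝ] ℝ), ‖lift G‖ = ‖G‖
  lift_surjective : Function.Surjective lift

/-- An element `z ∈ X ⊗π Y` attains its projective norm if it admits a representation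
`z = ∑ₙ xₙ ⊗ yₙ` with `∑ₙ ‖xₙ‖‖yₙ‖ < ∞` and `‖z‖π = ∑ₙ ‖xₙ‖‖yₙ‖`. -/
def AttainsProjNorm {X Y Z : Type*}
    [NormedAddCommGroup X] [NormedSpace ℝ X]
    [NormedAddCommGroup Y] [NormedSpace ℝ Y]
    [NormedAddCommGroup Z] [NormedSpace ℝ Z]
    (t : X →L[ℝ] Y →L[ℝ] Z) (z : Z) : Prop :=
  ∃ (x : ℕ → X) (y : ℕ → Y),
    Summable (fun n => ‖x n‖ * ‖y n‖) ∧ HasSum (fun n => t (x n) (y n)) z ∧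
    ‖z‖ = ∑' n, ‖x n‖ * ‖y n‖


lemma uc_slice {Y : Type*} [NormedAddCommGroup Y] [NormedSpace ℝ Y] [UniformConvexSpace Y]
    {ε : ℝ} (hε : 0 < ε) :
    ∃ δ > 0, ∀ (g : Y →L[ℝ] ℝ), ‖g‖ ≤ 1 → ∀ v w : Y, ‖v‖ ≤ 1 → ‖w‖ ≤ 1 →
      1 - δ < g v → 1 - δ < g w → ‖v - w‖ ≤ ε := by
  obtain ⟨δ, hδ, H⟩ := exists_forall_closed_ball_dist_add_le_two_sub Y hε
  refine ⟨δ / 2, by positivity, fun g hg v w hv hw hgv hgw => ?_⟩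
  by_contra hc
  push_neg at hc
  have h2 : ‖v + w‖ ≤ 2 - δ := H hv hw hc.le
  have h3 : g (v + w) ≤ ‖v + w‖ := by
    calc g (v + w) ≤ |g (v + w)| := le_abs_self _
    _ ≤ ‖g‖ * ‖v + w‖ := by simpa [Real.norm_eq_abs] using g.le_opNorm (v + w)
    _ ≤ 1 * ‖v + w‖ := by
        exact mul_le_mul_of_nonneg_right hg (norm_nonneg _)
    _ = ‖v + w‖ := one_mul _
  have h4 : g (v + w) = g v + g w := map_add g v w
  linarith

lemma uc_attain {Y : Type*} [NormedAddCommGroup Y] [NormedSpace ℝ Y] [UniformConvexSpace Y]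
    [CompleteSpace Y] (g : Y →L[ℝ] ℝ) (hg : ‖g‖ = 1) : ∃ v : Y, ‖v‖ = 1 ∧ g v = 1 := by
  have hv : ∀ k : ℕ, ∃ v : Y, ‖v‖ ≤ 1 ∧ 1 - 1 / (k + 1) < g v := by
    intro k
    have hr : 1 - 1 / ((k : ℝ) + 1) < ‖g‖ := by
      rw [hg]; have : (0:ℝ) < 1 / ((k:ℝ)+1) := by positivity
      linarith
    obtain ⟨x, hx1, hx2⟩ := g.exists_lt_apply_of_lt_opNorm hr
    rcases le_or_gt 0 (g x) with h | h
    · exact ⟨x, hx1.le, by simpa [Real.norm_eq_abs, abs_of_nonneg h] using hx2⟩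
    · refine ⟨-x, by simpa using hx1.le, ?_⟩
      have := hx2
      rw [Real.norm_eq_abs, abs_of_neg h] at this
      simpa using this
  choose v hv1 hv2 using hv
  have hcauchy : CauchySeq v := by
    rw [Metric.cauchySeq_iff]
    intro ε hε
    obtain ⟨δ, hδ, H⟩ := uc_slice (Y := Y) (half_pos hε)
    obtain ⟨N, hN⟩ := exists_nat_one_div_lt hδ
    refine ⟨N, fun m hm n hn => ?_⟩
    have hbm : (1:ℝ) - δ < g (v m) := by
      have : 1 / ((m:ℝ) + 1) ≤ 1 / ((N:ℝ) + 1) := by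
        apply one_div_le_one_div_of_le (by positivity)
        exact_mod_cast by omega
      have := hv2 m
      linarith [hN]
    have hbn : (1:ℝ) - δ < g (v n) := by
      have : 1 / ((n:ℝ) + 1) ≤ 1 / ((N:ℝ) + 1) := by
        apply one_div_le_one_div_of_le (by positivity)
        exact_mod_cast by omega
      have := hv2 n
      linarith [hN]
    have := H g hg.le (v m) (v n) (hv1 m) (hv1 n) hbm hbn
    rw [dist_eq_norm]
    linarith
  obtain ⟨vL, hlim⟩ := cauchySeq_tendsto_of_complete hcauchy
  have hgv : Filter.Tendsto (fun k => g (v k)) Filter.atTop (nhds (g vL)) :=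
    (g.continuous.tendsto vL).comp hlim
  have hlow : Filter.Tendsto (fun k : ℕ => 1 - 1 / ((k:ℝ) + 1)) Filter.atTop (nhds 1) := by
    have := tendsto_one_div_add_atTop_nhds_zero_nat (𝕜 := ℝ)
    simpa using (tendsto_const_nhds (x := (1:ℝ)) (f := Filter.atTop)).sub this
  have hg1 : Filter.Tendsto (fun k => g (v k)) Filter.atTop (nhds 1) := by
    apply tendsto_of_tendsto_of_tendsto_of_le_of_le hlow tendsto_const_nhds
    · exact fun k => (hv2 k).le
    · intro k
      calc g (v k) ≤ |g (v k)| := le_abs_self _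
      _ ≤ ‖g‖ * ‖v k‖ := by simpa [Real.norm_eq_abs] using g.le_opNorm (v k)
      _ ≤ 1 * 1 := by rw [hg]; simpa using hv1 k
      _ = 1 := one_mul 1
  have hgveq : g vL = 1 := tendsto_nhds_unique hgv hg1
  have hnle : ‖vL‖ ≤ 1 := by
    apply le_of_tendsto (hlim.norm)
    exact Filter.Eventually.of_forall hv1
  have hnge : 1 ≤ ‖vL‖ := by
    have : (1:ℝ) = g vL := hgveq.symm
    calc (1:ℝ) = g vL := hgveq.symm
    _ ≤ |g vL| := le_abs_self _
    _ ≤ ‖g‖ * ‖vL‖ := by simpa [Real.norm_eq_abs] using g.le_opNorm vL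
    _ = ‖vL‖ := by rw [hg, one_mul]
  exact ⟨vL, le_antisymm hnle hnge, hgveq⟩

lemma fd_norming {X W : Type*} [NormedAddCommGroup X] [NormedSpace ℝ X] [FiniteDimensional ℝ X]
    [NormedAddCommGroup W] [NormedSpace ℝ W] (G : X →L[ℝ] W) (hG : ‖G‖ = 1)
    {ζ : ℝ} (hζ : 0 < ζ) :
    ∃ η > 0, ∀ u : X, ‖u‖ = 1 → 1 - η < ‖G u‖ →
      ∃ a : X, ‖a‖ = 1 ∧ ‖G a‖ = 1 ∧ ‖u - a‖ ≤ ζ := by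
  by_contra hc
  push_neg at hc
  have hc' : ∀ k : ℕ, ∃ u : X, ‖u‖ = 1 ∧ 1 - 1/((k:ℝ)+1) < ‖G u‖ ∧
      ∀ a : X, ‖a‖ = 1 → ‖G a‖ = 1 → ζ < ‖u - a‖ := by
    intro k
    obtain ⟨u, h1, h2, h3⟩ := hc (1/((k:ℝ)+1)) (by positivity)
    exact ⟨u, h1, h2, h3⟩
  choose u hu1 hu2 hu3 using hc'
  have hmem : ∀ k, u k ∈ Metric.sphere (0:X) 1 := fun k => by
    simpa [mem_sphere_zero_iff_norm] using hu1 k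
  obtain ⟨uL, huLmem, φ, hφ, hφlim⟩ := (isCompact_sphere (0:X) 1).tendsto_subseq hmem
  have huL : ‖uL‖ = 1 := by simpa [mem_sphere_zero_iff_norm] using huLmem
  have hGlim : Filter.Tendsto (fun k => ‖G (u (φ k))‖) Filter.atTop (nhds ‖G uL‖) :=
    ((G.continuous.tendsto uL).comp hφlim).norm
  have hGuLle : ‖G uL‖ ≤ 1 := by
    calc ‖G uL‖ ≤ ‖G‖ * ‖uL‖ := G.le_opNorm uL
    _ = 1 := by rw [hG, huL, one_mul]
  have hlow : Filter.Tendsto (fun k : ℕ => 1 - 1 / ((φ k:ℝ) + 1)) Filter.atTop (nhds 1) := by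
    have h0 : Filter.Tendsto (fun n : ℕ => 1 / ((n:ℝ) + 1)) Filter.atTop (nhds 0) :=
      tendsto_one_div_add_atTop_nhds_zero_nat
    have := (h0.comp hφ.tendsto_atTop)
    simpa using (tendsto_const_nhds (x := (1:ℝ)) (f := Filter.atTop)).sub this
  have hGuLge : 1 ≤ ‖G uL‖ :=
    le_of_tendsto_of_tendsto' hlow hGlim (fun k => (hu2 (φ k)).le)
  have hGuL : ‖G uL‖ = 1 := le_antisymm hGuLle hGuLge
  have hfar : ∀ k, ζ < ‖u (φ k) - uL‖ := fun k => hu3 (φ k) uL huL hGuL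
  have hzero : Filter.Tendsto (fun k => ‖u (φ k) - uL‖) Filter.atTop (nhds 0) := by
    rw [← tendsto_iff_norm_sub_tendsto_zero]
    exact hφlim
  have : ζ ≤ 0 := le_of_tendsto_of_tendsto' tendsto_const_nhds hzero (fun k => (hfar k).le)
  linarith

set_option maxHeartbeats 1000000 in
/-- If `X` is finite dimensional and `Y` is uniformly convex, then the set
of norm-attaining tensors is dense in `X ⊗π Y`. -/
theorem tensor_normAttaining_dense_of_finiteDimensional_uniformConvex
    {X Y Z : Type*} [NormedAddCommGroup X] [NormedSpace ℝ X] [FiniteDimensional ℝ X]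
    [NormedAddCommGroup Y] [NormedSpace ℝ Y] [CompleteSpace Y] [UniformConvexSpace Y]
    [NormedAddCommGroup Z] [NormedSpace ℝ Z] [CompleteSpace Z]
    (t : X →L[ℝ] Y →L[ℝ] Z) (lift : (X →L[ℝ] (Y →L[ℝ] ℝ)) → (Z →L[ℝ] ℝ))
    (h : IsProjTensorProduct X Y Z t lift) :
    Dense {z : Z | AttainsProjNorm t z} := by
  classical
  rw [Metric.dense_iff]
  intro z ε hε
  by_cases hz : z = 0
  · subst hz
    refine ⟨0, Metric.mem_ball_self hε, ?_⟩
    refine ⟨fun _ => 0, fun _ => 0, by simpa using summable_zero, ?_, by simp⟩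
    simpa using (hasSum_zero : HasSum (fun _ : ℕ => (0:Z)) 0)
  -- norming functional
  obtain ⟨f, hf1, hfz0⟩ := exists_dual_vector ℝ z (norm_ne_zero_iff.mpr hz)
  have hfz : f z = ‖z‖ := by exact_mod_cast hfz0
  obtain ⟨G, hG⟩ := h.lift_surjective f
  have hGnorm : ‖G‖ = 1 := by rw [← h.norm_lift, hG, hf1]
  -- parameters
  set ε₃ : ℝ := ε / (4 * (‖z‖ + 1)) with hε₃def
  have hε₃ : 0 < ε₃ := by
    have : 0 < ‖z‖ + 1 := by positivity
    positivity
  obtain ⟨δY, hδY, HY⟩ := uc_slice (Y := Y) hε₃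
  set ζ : ℝ := min ε₃ (δY / 4) with hζdef
  have hζ : 0 < ζ := lt_min hε₃ (by positivity)
  obtain ⟨ηX, hηX, HX⟩ := fd_norming G hGnorm hζ
  set η : ℝ := min ηX (δY / 4) with hηdef
  have hη : 0 < η := lt_min hηX (by positivity)
  set δ : ℝ := min 1 (ε * η / 4) with hδdef
  have hδ : 0 < δ := lt_min one_pos (by positivity)
  -- a good representation
  have hne : {r : ℝ | ∃ (x : ℕ → X) (y : ℕ → Y),
      Summable (fun n => ‖x n‖ * ‖y n‖) ∧ HasSum (fun n => t (x n) (y n)) z ∧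
      r = ∑' n, ‖x n‖ * ‖y n‖}.Nonempty := by
    obtain ⟨x, y, h1, h2⟩ := h.exists_rep z
    exact ⟨_, x, y, h1, h2, rfl⟩
  obtain ⟨r, hrmem, hrlt⟩ := Real.lt_sInf_add_pos hne hδ
  obtain ⟨x, y, hxys, hxyh, rfl⟩ := hrmem
  rw [← h.norm_eq_sInf z] at hrlt
  set s : ℕ → ℝ := fun n => ‖x n‖ * ‖y n‖ with hsdef
  set T : ℝ := ∑' n, s n with hTdef
  have hs0 : ∀ n, 0 ≤ s n := fun n => mul_nonneg (norm_nonneg _) (norm_nonneg _)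
  have hT0 : 0 ≤ T := tsum_nonneg hs0
  -- pairing
  have hGhas : HasSum (fun n => G (x n) (y n)) ‖z‖ := by
    have := (lift G).hasSum hxyh
    simp only [h.lift_tmul] at this
    rwa [hG, hfz] at this
  have hbound : ∀ n, G (x n) (y n) ≤ s n := by
    intro n
    calc G (x n) (y n) ≤ |G (x n) (y n)| := le_abs_self _
    _ ≤ ‖G (x n)‖ * ‖y n‖ := by
        simpa [Real.norm_eq_abs] using (G (x n)).le_opNorm (y n)
    _ ≤ (‖G‖ * ‖x n‖) * ‖y n‖ :=
        mul_le_mul_of_nonneg_right (G.le_opNorm (x n)) (norm_nonneg _)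
    _ = s n := by rw [hGnorm, one_mul]
  set d : ℕ → ℝ := fun n => s n - G (x n) (y n) with hddef
  have hd0 : ∀ n, 0 ≤ d n := fun n => sub_nonneg.2 (hbound n)
  have hdhas : HasSum d (T - ‖z‖) := hxys.hasSum.sub hGhas
  have hdsum : ∑' n, d n = T - ‖z‖ := hdhas.tsum_eq
  have hdle : ∑' n, d n ≤ δ := by rw [hdsum]; linarith
  -- the good set
  set A : Set ℕ := {n | (1 - η) * s n < G (x n) (y n)} with hAdef
  -- replacement vectors on A
  have key : ∀ n ∈ A, ∃ (a : X) (b : Y), ‖a‖ = ‖x n‖ ∧ ‖b‖ = ‖y n‖ ∧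
      G a b = s n ∧ ‖x n - a‖ ≤ ζ * ‖x n‖ ∧ ‖y n - b‖ ≤ ε₃ * ‖y n‖ := by
    intro n hn
    have hGxy : (1 - η) * s n < G (x n) (y n) := hn
    have hsn : 0 < s n := by
      rcases lt_or_eq_of_le (hs0 n) with h' | h'
      · exact h'
      · exfalso
        have h1 := hbound n
        have h2 : (1 - η) * s n = 0 := by rw [← h']; ring
        linarith
    have hsn' : 0 < ‖x n‖ * ‖y n‖ := by simpa only [hsdef] using hsn
    have hxn : 0 < ‖x n‖ := by
      rcases (norm_nonneg (x n)).lt_or_eq with h' | h'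
      · exact h'
      · exfalso
        have : ‖x n‖ * ‖y n‖ = 0 := by rw [← h', zero_mul]
        linarith
    have hyn : 0 < ‖y n‖ := by
      rcases (norm_nonneg (y n)).lt_or_eq with h' | h'
      · exact h'
      · exfalso
        have : ‖x n‖ * ‖y n‖ = 0 := by rw [← h', mul_zero]
        linarith
    set u : X := ‖x n‖⁻¹ • x n with hudef
    set v : Y := ‖y n‖⁻¹ • y n with hvdef
    have hu1 : ‖u‖ = 1 := by
      rw [hudef, norm_smul, norm_inv, norm_norm, inv_mul_cancel₀ hxn.ne']
    have hv1 : ‖v‖ = 1 := by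
      rw [hvdef, norm_smul, norm_inv, norm_norm, inv_mul_cancel₀ hyn.ne']
    have hGuv : G u v = (‖x n‖⁻¹ * ‖y n‖⁻¹) * G (x n) (y n) := by
      rw [hudef, hvdef]; simp [map_smul]; ring
    have hGuv' : 1 - η < G u v := by
      rw [hGuv]
      have : (1 - η) * s n * (‖x n‖⁻¹ * ‖y n‖⁻¹) < G (x n) (y n) * (‖x n‖⁻¹ * ‖y n‖⁻¹) := by
        apply mul_lt_mul_of_pos_right hGxy (by positivity)
      have hsinv : s n * (‖x n‖⁻¹ * ‖y n‖⁻¹) = 1 := by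
        simp only [hsdef]; field_simp
      calc 1 - η = (1 - η) * (s n * (‖x n‖⁻¹ * ‖y n‖⁻¹)) := by rw [hsinv]; ring
      _ = (1 - η) * s n * (‖x n‖⁻¹ * ‖y n‖⁻¹) := by ring
      _ < G (x n) (y n) * (‖x n‖⁻¹ * ‖y n‖⁻¹) := this
      _ = (‖x n‖⁻¹ * ‖y n‖⁻¹) * G (x n) (y n) := by ring
    have hGu : 1 - η < ‖G u‖ := by
      calc 1 - η < G u v := hGuv'
      _ ≤ |G u v| := le_abs_self _
      _ ≤ ‖G u‖ * ‖v‖ := by simpa [Real.norm_eq_abs] using (G u).le_opNorm v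
      _ = ‖G u‖ := by rw [hv1, mul_one]
    have hGu' : 1 - ηX < ‖G u‖ := by
      have : η ≤ ηX := min_le_left _ _
      linarith
    obtain ⟨a₀, ha₀1, ha₀2, ha₀3⟩ := HX u hu1 hGu'
    have hg1 : ‖G a₀‖ = 1 := ha₀2
    have hgv : 1 - δY < (G a₀) v := by
      have hdiff : |G a₀ v - G u v| ≤ ζ := by
        have : G a₀ v - G u v = (G (a₀ - u)) v := by simp [map_sub]
        rw [this]
        calc |(G (a₀ - u)) v| ≤ ‖G (a₀ - u)‖ * ‖v‖ := by
              simpa [Real.norm_eq_abs] using (G (a₀ - u)).le_opNorm v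
        _ ≤ (‖G‖ * ‖a₀ - u‖) * ‖v‖ :=
            mul_le_mul_of_nonneg_right (G.le_opNorm _) (norm_nonneg _)
        _ = ‖a₀ - u‖ := by rw [hGnorm, hv1, one_mul, mul_one]
        _ = ‖u - a₀‖ := norm_sub_rev _ _
        _ ≤ ζ := ha₀3
      have hζ4 : ζ ≤ δY / 4 := min_le_right _ _
      have hη4 : η ≤ δY / 4 := min_le_right _ _
      have := abs_le.1 hdiff
      linarith [hGuv', this.1]
    obtain ⟨b₀, hb₀1, hb₀2⟩ := uc_attain (G a₀) hg1
    have hvb : ‖v - b₀‖ ≤ ε₃ := by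
      apply HY (G a₀) hg1.le v b₀ hv1.le hb₀1.le hgv
      rw [hb₀2]; linarith
    refine ⟨‖x n‖ • a₀, ‖y n‖ • b₀, ?_, ?_, ?_, ?_, ?_⟩
    · rw [norm_smul, Real.norm_eq_abs, abs_of_pos hxn, ha₀1, mul_one]
    · rw [norm_smul, Real.norm_eq_abs, abs_of_pos hyn, hb₀1, mul_one]
    · simp only [map_smul, ContinuousLinearMap.smul_apply, smul_eq_mul]
      rw [hb₀2]; simp only [hsdef]; ring
    · have hxu : x n = ‖x n‖ • u := by
        rw [hudef, smul_smul, mul_inv_cancel₀ hxn.ne', one_smul]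
      have hrw : x n - ‖x n‖ • a₀ = ‖x n‖ • (u - a₀) := by
        rw [smul_sub, ← hxu]
      rw [hrw, norm_smul, Real.norm_eq_abs, abs_of_pos hxn]
      calc ‖x n‖ * ‖u - a₀‖ ≤ ‖x n‖ * ζ := mul_le_mul_of_nonneg_left ha₀3 hxn.le
      _ = ζ * ‖x n‖ := mul_comm _ _
    · have hyv : y n = ‖y n‖ • v := by
        rw [hvdef, smul_smul, mul_inv_cancel₀ hyn.ne', one_smul]
      have hrw : y n - ‖y n‖ • b₀ = ‖y n‖ • (v - b₀) := by
        rw [smul_sub, ← hyv]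
      rw [hrw, norm_smul, Real.norm_eq_abs, abs_of_pos hyn]
      calc ‖y n‖ * ‖v - b₀‖ ≤ ‖y n‖ * ε₃ := mul_le_mul_of_nonneg_left hvb hyn.le
      _ = ε₃ * ‖y n‖ := mul_comm _ _
  choose! a b ha hb hGab hxa hyb using key
  set x' : ℕ → X := fun n => if n ∈ A then a n else 0 with hx'def
  set y' : ℕ → Y := fun n => if n ∈ A then b n else 0 with hy'def
  have hs' : ∀ n, ‖x' n‖ * ‖y' n‖ = (if n ∈ A then s n else 0) := by
    intro n
    by_cases hn : n ∈ A
    · simp only [hx'def, hy'def, if_pos hn, ha n hn, hb n hn, hsdef]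
    · simp [hx'def, hy'def, if_neg hn]
  have hite_le : ∀ n, (if n ∈ A then s n else 0) ≤ s n := by
    intro n; split <;> simp [hs0 n]
  have hx'sum : Summable (fun n => ‖x' n‖ * ‖y' n‖) := by
    apply Summable.of_nonneg_of_le (fun n => mul_nonneg (norm_nonneg _) (norm_nonneg _))
      (fun n => ?_) hxys
    rw [hs' n]; exact hite_le n
  have hz'sum : Summable (fun n => t (x' n) (y' n)) := by
    apply Summable.of_norm_bounded hxys
    intro n
    calc ‖t (x' n) (y' n)‖ ≤ ‖x' n‖ * ‖y' n‖ := h.norm_tmul_le _ _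
    _ ≤ s n := by rw [hs' n]; exact hite_le n
  set z' : Z := ∑' n, t (x' n) (y' n) with hz'def
  have hz'has : HasSum (fun n => t (x' n) (y' n)) z' := hz'sum.hasSum
  set T' : ℝ := ∑' n, (if n ∈ A then s n else 0) with hT'def
  have hT'sum : Summable (fun n => if n ∈ A then s n else 0) :=
    Summable.of_nonneg_of_le (fun n => by split <;> simp [hs0 n]) hite_le hxys
  have hGz' : lift G z' = T' := by
    have h1 : HasSum (fun n => G (x' n) (y' n)) (lift G z') := by
      have := (lift G).hasSum hz'has
      simpa only [h.lift_tmul] using this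
    have h2 : ∀ n, G (x' n) (y' n) = (if n ∈ A then s n else 0) := by
      intro n
      by_cases hn : n ∈ A
      · simp only [hx'def, hy'def, if_pos hn]; exact hGab n hn
      · simp [hx'def, hy'def, if_neg hn]
    have h3 : HasSum (fun n => if n ∈ A then s n else 0) (lift G z') := by
      rw [← funext h2]; exact h1
    exact h3.tsum_eq.symm
  have hz'norm : ‖z'‖ = ∑' n, ‖x' n‖ * ‖y' n‖ := by
    have hT'eq : ∑' n, ‖x' n‖ * ‖y' n‖ = T' := by
      rw [hT'def]; exact tsum_congr hs'
    have hub : ‖z'‖ ≤ T' := by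
      rw [h.norm_eq_sInf z']
      apply csInf_le
      · refine ⟨0, fun r hr => ?_⟩
        obtain ⟨xx, yy, h1, h2, rfl⟩ := hr
        exact tsum_nonneg (fun n => mul_nonneg (norm_nonneg _) (norm_nonneg _))
      · exact ⟨x', y', hx'sum, hz'has, hT'eq.symm⟩
    have hlb : T' ≤ ‖z'‖ := by
      calc T' = lift G z' := hGz'.symm
      _ ≤ |lift G z'| := le_abs_self _
      _ ≤ ‖lift G‖ * ‖z'‖ := by simpa [Real.norm_eq_abs] using (lift G).le_opNorm z'
      _ = ‖z'‖ := by rw [h.norm_lift, hGnorm, one_mul]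
    rw [hT'eq]
    exact le_antisymm hub hlb
  -- distance estimate
  have hdiffsum : Summable (fun n => ‖t (x n) (y n) - t (x' n) (y' n)‖) := by
    apply Summable.of_nonneg_of_le (fun n => norm_nonneg _) (fun n => ?_) (hxys.add hxys)
    calc ‖t (x n) (y n) - t (x' n) (y' n)‖
        ≤ ‖t (x n) (y n)‖ + ‖t (x' n) (y' n)‖ := norm_sub_le _ _
    _ ≤ s n + s n := by
        apply add_le_add (h.norm_tmul_le _ _)
        calc ‖t (x' n) (y' n)‖ ≤ ‖x' n‖ * ‖y' n‖ := h.norm_tmul_le _ _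
        _ ≤ s n := by rw [hs' n]; exact hite_le n
  set c : ℕ → ℝ := fun n => (ζ + ε₃) * s n + (if n ∈ A then 0 else s n) with hcdef
  have hcsum : Summable c := ((hxys.mul_left _).add
    (Summable.of_nonneg_of_le (fun n => by split <;> simp [hs0 n])
      (fun n => by split <;> simp [hs0 n]) hxys))
  have hterm : ∀ n, ‖t (x n) (y n) - t (x' n) (y' n)‖ ≤ c n := by
    intro n
    by_cases hn : n ∈ A
    · have hx'n : x' n = a n := by simp [hx'def, if_pos hn]
      have hy'n : y' n = b n := by simp [hy'def, if_pos hn]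
      rw [hx'n, hy'n]
      have hsplit : t (x n) (y n) - t (a n) (b n)
          = t (x n - a n) (y n) + t (a n) (y n - b n) := by
        rw [map_sub, ContinuousLinearMap.sub_apply, map_sub]; abel
      rw [hsplit]; simp only [hcdef]
      have e1 : ‖t (x n - a n) (y n)‖ ≤ ζ * ‖x n‖ * ‖y n‖ := by
        calc ‖t (x n - a n) (y n)‖ ≤ ‖x n - a n‖ * ‖y n‖ := h.norm_tmul_le _ _
        _ ≤ (ζ * ‖x n‖) * ‖y n‖ :=
            mul_le_mul_of_nonneg_right (hxa n hn) (norm_nonneg _)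
        _ = ζ * ‖x n‖ * ‖y n‖ := by ring
      have e2 : ‖t (a n) (y n - b n)‖ ≤ ε₃ * ‖x n‖ * ‖y n‖ := by
        calc ‖t (a n) (y n - b n)‖ ≤ ‖a n‖ * ‖y n - b n‖ := h.norm_tmul_le _ _
        _ = ‖x n‖ * ‖y n - b n‖ := by rw [ha n hn]
        _ ≤ ‖x n‖ * (ε₃ * ‖y n‖) :=
            mul_le_mul_of_nonneg_left (hyb n hn) (norm_nonneg _)
        _ = ε₃ * ‖x n‖ * ‖y n‖ := by ring
      calc ‖t (x n - a n) (y n) + t (a n) (y n - b n)‖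
          ≤ ‖t (x n - a n) (y n)‖ + ‖t (a n) (y n - b n)‖ := norm_add_le _ _
      _ ≤ ζ * ‖x n‖ * ‖y n‖ + ε₃ * ‖x n‖ * ‖y n‖ := add_le_add e1 e2
      _ = (ζ + ε₃) * s n + 0 := by simp only [hsdef]; ring
      _ = (ζ + ε₃) * s n + (if n ∈ A then 0 else s n) := by rw [if_pos hn]
    · have hx'n : x' n = 0 := by simp [hx'def, if_neg hn]
      have hy'n : y' n = 0 := by simp [hy'def, if_neg hn]
      rw [hx'n, hy'n]; simp only [hcdef]
      simp only [map_zero, ContinuousLinearMap.zero_apply, sub_zero]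
      calc ‖t (x n) (y n)‖ ≤ s n := h.norm_tmul_le _ _
      _ = 0 + s n := by ring
      _ ≤ (ζ + ε₃) * s n + (if n ∈ A then 0 else s n) := by
          rw [if_neg hn]
          have : 0 ≤ (ζ + ε₃) * s n := mul_nonneg (by positivity) (hs0 n)
          linarith
  have hB : ∑' n, (if n ∈ A then 0 else s n) ≤ δ / η := by
    have hBsum : Summable (fun n => if n ∈ A then 0 else s n) :=
      Summable.of_nonneg_of_le (fun n => by split <;> simp [hs0 n])
        (fun n => by split <;> simp [hs0 n]) hxys
    have hdsummable : Summable d := hdhas.summable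
    have hpt : ∀ n, (if n ∈ A then 0 else s n) ≤ d n / η := by
      intro n
      by_cases hn : n ∈ A
      · rw [if_pos hn]; exact div_nonneg (hd0 n) hη.le
      · rw [if_neg hn]
        have hnn : G (x n) (y n) ≤ (1 - η) * s n := not_lt.1 hn
        have : η * s n ≤ d n := by simp only [hddef]; nlinarith [hs0 n]
        rw [le_div_iff₀ hη]
        nlinarith [hs0 n]
    calc ∑' n, (if n ∈ A then 0 else s n) ≤ ∑' n, d n / η :=
        Summable.tsum_le_tsum hpt hBsum (hdsummable.div_const η)
    _ = (∑' n, d n) / η := by rw [tsum_div_const]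
    _ ≤ δ / η := by gcongr
  have hdist : ‖z - z'‖ ≤ (ζ + ε₃) * T + δ / η := by
    have hhas : HasSum (fun n => t (x n) (y n) - t (x' n) (y' n)) (z - z') :=
      hxyh.sub hz'has
    calc ‖z - z'‖ = ‖∑' n, (t (x n) (y n) - t (x' n) (y' n))‖ := by rw [hhas.tsum_eq]
    _ ≤ ∑' n, ‖t (x n) (y n) - t (x' n) (y' n)‖ := norm_tsum_le_tsum_norm hdiffsum
    _ ≤ ∑' n, c n := Summable.tsum_le_tsum hterm hdiffsum hcsum
    _ = (ζ + ε₃) * T + ∑' n, (if n ∈ A then 0 else s n) := by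
        rw [hcdef, Summable.tsum_add (hxys.mul_left _)
          (Summable.of_nonneg_of_le (fun n => by split <;> simp [hs0 n])
            (fun n => by split <;> simp [hs0 n]) hxys), tsum_mul_left, hTdef]
    _ ≤ (ζ + ε₃) * T + δ / η := by
        have := hB; linarith
  have hfinal : ‖z - z'‖ < ε := by
    have hζε₃ : ζ ≤ ε₃ := min_le_left _ _
    have hTle : T ≤ ‖z‖ + 1 := by
      have hδ1 : δ ≤ 1 := min_le_left _ _
      linarith [hrlt]
    have h1 : (ζ + ε₃) * T ≤ 2 * ε₃ * (‖z‖ + 1) := by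
      have : ζ + ε₃ ≤ 2 * ε₃ := by linarith
      have h2ε₃ : 0 ≤ 2 * ε₃ := by positivity
      calc (ζ + ε₃) * T ≤ (2 * ε₃) * T :=
          mul_le_mul_of_nonneg_right this hT0
      _ ≤ (2 * ε₃) * (‖z‖ + 1) := mul_le_mul_of_nonneg_left hTle h2ε₃
      _ = 2 * ε₃ * (‖z‖ + 1) := rfl
    have h2 : 2 * ε₃ * (‖z‖ + 1) = ε / 2 := by
      rw [hε₃def]
      have hz1 : (‖z‖ + 1) ≠ 0 := by positivity
      field_simp
      ring
    have h3 : δ / η ≤ ε / 4 := by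
      have : δ ≤ ε * η / 4 := min_le_right _ _
      rw [div_le_iff₀ hη]
      linarith
    calc ‖z - z'‖ ≤ (ζ + ε₃) * T + δ / η := hdist
    _ ≤ ε / 2 + ε / 4 := by rw [← h2]; exact add_le_add h1 h3
    _ < ε := by linarith
  refine ⟨z', ?_, ?_⟩
  · rw [Metric.mem_ball, dist_eq_norm, ← norm_sub_rev]
    exact hfinal
  · exact ⟨x', y', hx'sum, hz'has, hz'norm⟩
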